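/- Let Σ = σ²I_p + U Γ Uᵀ with U ∈ O(p, r) and Γ = diag(λ1, ..., λr), λ1 ≥ ... ≥ λr > 0. Then for any W ∈ O(p, r), (λr/2)·‖UUᵀ − WWᵀ‖_F² ≤ ⟨Σ, UUᵀ − WWᵀ⟩ ≤ (λ1/2)·‖UUᵀ − WWᵀ‖_F². -/
import Mathlib

open Matrix

/-- Frobenius norm of a real matrix. -/
noncomputable def frob {m n : ℕ} (A : Matrix (Fin m) (Fin n) ℝ) : ℝ :=
  Real.sqrt (∑ i, ∑ j, (A i j) ^ 2)

/-- For `Σ = σ²I + UΓUᵀ`, `U, W ∈ O(p,r)`, `Γ = diag(λ1,...,λr)` with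
`λ1 ≥ ... ≥ λr > 0`:
`(λr/2)‖UUᵀ−WWᵀ‖_F² ≤ ⟨Σ, UUᵀ−WWᵀ⟩ ≤ (λ1/2)‖UUᵀ−WWᵀ‖_F²`. -/
theorem spiked_covariance_quadratic_bounds {p r : ℕ} (hr : 0 < r)
    (U W : Matrix (Fin p) (Fin r) ℝ)
    (hU : Uᵀ * U = 1) (hW : Wᵀ * W = 1)
    (σ : ℝ) (hσ : 0 < σ)
    (l : Fin r → ℝ) (hpos : ∀ i, 0 < l i)
    (hmono : ∀ i j : Fin r, i ≤ j → l j ≤ l i) :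
    (l ⟨r - 1, by omega⟩) / 2 * frob (U * Uᵀ - W * Wᵀ) ^ 2 ≤
      trace ((σ ^ 2 • (1 : Matrix (Fin p) (Fin p) ℝ) + U * diagonal l * Uᵀ)ᵀ *
        (U * Uᵀ - W * Wᵀ)) ∧
    trace ((σ ^ 2 • (1 : Matrix (Fin p) (Fin p) ℝ) + U * diagonal l * Uᵀ)ᵀ *
        (U * Uᵀ - W * Wᵀ)) ≤
      (l ⟨0, hr⟩) / 2 * frob (U * Uᵀ - W * Wᵀ) ^ 2 := by
  classical
  set S : Matrix (Fin r) (Fin r) ℝ := Uᵀ * W with hS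
  have hSt : Sᵀ = Wᵀ * U := by rw [hS, transpose_mul, transpose_transpose]
  set D : Matrix (Fin p) (Fin p) ℝ := U * Uᵀ - W * Wᵀ with hD
  -- diagonal entries of I - S Sᵀ are nonnegative
  have hm : ∀ i, 0 ≤ 1 - ∑ j, S i j ^ 2 := by
    intro i
    set P : Matrix (Fin p) (Fin p) ℝ := 1 - W * Wᵀ with hPdef
    have h2 : W * Wᵀ * (W * Wᵀ) = W * Wᵀ := by
      rw [Matrix.mul_assoc, ← Matrix.mul_assoc Wᵀ, hW, Matrix.one_mul]
    have hPP : P * P = P := by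
      rw [hPdef]; rw [Matrix.sub_mul, Matrix.mul_sub, Matrix.mul_sub, h2]
      simp
    have hPt : Pᵀ = P := by
      rw [hPdef]; simp [transpose_sub, transpose_mul]
    have hN : (1 : Matrix (Fin r) (Fin r) ℝ) - Uᵀ * W * (Uᵀ * W)ᵀ = (P * U)ᵀ * (P * U) := by
      have e : (P * U)ᵀ * (P * U) = Uᵀ * (P * U) := by
        rw [transpose_mul, hPt, Matrix.mul_assoc, ← Matrix.mul_assoc P, hPP]
      rw [e, hPdef, Matrix.sub_mul, Matrix.one_mul, Matrix.mul_sub, hU,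
        transpose_mul, transpose_transpose]
      simp only [Matrix.mul_assoc]
    have h1 : (1 : ℝ) - ∑ j, S i j ^ 2
        = ((1 : Matrix (Fin r) (Fin r) ℝ) - Uᵀ * W * (Uᵀ * W)ᵀ) i i := by
      simp [Matrix.sub_apply, Matrix.one_apply_eq, Matrix.mul_apply,
        Matrix.transpose_apply, sq, hS, mul_comm]
    have h2 : ((P * U)ᵀ * (P * U)) i i = ∑ k, ((P * U) k i) ^ 2 := by
      simp [Matrix.mul_apply, sq, mul_comm]
    rw [h1, hN, h2]
    positivity
  -- trace identity
  have hT : trace ((σ ^ 2 • (1 : Matrix (Fin p) (Fin p) ℝ) + U * diagonal l * Uᵀ)ᵀ * D)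
      = ∑ i, l i * (1 - ∑ j, S i j ^ 2) := by
    have hsymm : (σ ^ 2 • (1 : Matrix (Fin p) (Fin p) ℝ) + U * diagonal l * Uᵀ)ᵀ
        = σ ^ 2 • (1 : Matrix (Fin p) (Fin p) ℝ) + U * diagonal l * Uᵀ := by
      simp [transpose_add, transpose_smul, transpose_mul, Matrix.mul_assoc]
    rw [hsymm, Matrix.add_mul, trace_add]
    have h0 : trace ((σ ^ 2 • (1 : Matrix (Fin p) (Fin p) ℝ)) * D) = 0 := by
      rw [Matrix.smul_mul, Matrix.one_mul, trace_smul, hD, trace_sub,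
        trace_mul_comm U Uᵀ, trace_mul_comm W Wᵀ, hU, hW, sub_self, smul_zero]
    rw [h0, zero_add, hD, Matrix.mul_sub, trace_sub]
    have h1 : trace (U * diagonal l * Uᵀ * (U * Uᵀ)) = ∑ i, l i := by
      have : U * diagonal l * Uᵀ * (U * Uᵀ) = U * (diagonal l * Uᵀ) := by
        rw [Matrix.mul_assoc (U * diagonal l), ← Matrix.mul_assoc Uᵀ, hU,
          Matrix.one_mul, Matrix.mul_assoc]
      rw [this, trace_mul_comm, Matrix.mul_assoc, hU, Matrix.mul_one, trace_diagonal]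
    have h2 : trace (U * diagonal l * Uᵀ * (W * Wᵀ)) = ∑ i, l i * ∑ j, S i j ^ 2 := by
      have e1 : U * diagonal l * Uᵀ * (W * Wᵀ) = U * (diagonal l * (S * (Wᵀ))) := by
        rw [hS]; simp only [Matrix.mul_assoc]
      rw [e1, trace_mul_comm, Matrix.mul_assoc, Matrix.mul_assoc, ← hSt]
      have e2 : trace (diagonal l * (S * Sᵀ)) = ∑ i, l i * (S * Sᵀ) i i := by
        simp [Matrix.trace, Matrix.diag, Matrix.diagonal_mul]
      rw [e2]
      congr 1
      ext i
      congr 1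
      simp [Matrix.mul_apply, sq]
    rw [h1, h2, ← Finset.sum_sub_distrib]
    congr 1
    ext i
    ring
  -- Frobenius norm identity
  have hFnn : (0:ℝ) ≤ ∑ i, ∑ j, (D i j) ^ 2 := by positivity
  have hF : frob D ^ 2 = 2 * ∑ i, (1 - ∑ j, S i j ^ 2) := by
    have hfr : frob D ^ 2 = ∑ i, ∑ j, (D i j) ^ 2 := Real.sq_sqrt hFnn
    have hDt : Dᵀ = D := by
      rw [hD]; simp [transpose_sub, transpose_mul]
    have htr : trace (Dᵀ * D) = ∑ i, ∑ j, (D i j) ^ 2 := by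
      rw [Finset.sum_comm]
      simp [Matrix.trace, Matrix.diag, Matrix.mul_apply, sq]
    have hAA : trace ((U * Uᵀ) * (U * Uᵀ)) = (r : ℝ) := by
      have : (U * Uᵀ) * (U * Uᵀ) = U * Uᵀ := by
        rw [Matrix.mul_assoc, ← Matrix.mul_assoc Uᵀ, hU, Matrix.one_mul]
      rw [this, trace_mul_comm, hU, trace_one]
      simp
    have hBB : trace ((W * Wᵀ) * (W * Wᵀ)) = (r : ℝ) := by
      have : (W * Wᵀ) * (W * Wᵀ) = W * Wᵀ := by
        rw [Matrix.mul_assoc, ← Matrix.mul_assoc Wᵀ, hW, Matrix.one_mul]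
      rw [this, trace_mul_comm, hW, trace_one]
      simp
    have hAB : trace ((U * Uᵀ) * (W * Wᵀ)) = ∑ i, ∑ j, S i j ^ 2 := by
      have e1 : (U * Uᵀ) * (W * Wᵀ) = U * (S * Wᵀ) := by
        rw [hS]; simp only [Matrix.mul_assoc]
      rw [e1, trace_mul_comm, Matrix.mul_assoc, ← hSt]
      simp [Matrix.trace, Matrix.diag, Matrix.mul_apply, sq]
    have hDD : trace (D * D) = 2 * ∑ i, (1 - ∑ j, S i j ^ 2) := by
      rw [hD, Matrix.sub_mul, Matrix.mul_sub, Matrix.mul_sub, trace_sub, trace_sub,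
        trace_sub, hAA, hBB, hAB, trace_mul_comm (W * Wᵀ) (U * Uᵀ), hAB]
      rw [Finset.sum_sub_distrib, Finset.sum_const, Finset.card_univ]
      simp
      ring
    rw [hfr, ← htr, hDt, hDD]
  rw [hT, hF]
  constructor
  · have : l ⟨r - 1, by omega⟩ / 2 * (2 * ∑ i, (1 - ∑ j, S i j ^ 2))
        = ∑ i, l ⟨r - 1, by omega⟩ * (1 - ∑ j, S i j ^ 2) := by
      rw [show (l ⟨r - 1, by omega⟩) / 2 * (2 * ∑ i, (1 - ∑ j, S i j ^ 2))
        = l ⟨r - 1, by omega⟩ * ∑ i, (1 - ∑ j, S i j ^ 2) from by ring, Finset.mul_sum]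
    rw [this]
    apply Finset.sum_le_sum
    intro i _
    apply mul_le_mul_of_nonneg_right _ (hm i)
    exact hmono i ⟨r - 1, by omega⟩ (by simp [Fin.le_def]; omega)
  · have : l ⟨0, hr⟩ / 2 * (2 * ∑ i, (1 - ∑ j, S i j ^ 2))
        = ∑ i, l ⟨0, hr⟩ * (1 - ∑ j, S i j ^ 2) := by
      rw [show (l ⟨0, hr⟩) / 2 * (2 * ∑ i, (1 - ∑ j, S i j ^ 2))
        = l ⟨0, hr⟩ * ∑ i, (1 - ∑ j, S i j ^ 2) from by ring, Finset.mul_sum]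
    rw [this]
    apply Finset.sum_le_sum
    intro i _
    apply mul_le_mul_of_nonneg_right _ (hm i)
    exact hmono ⟨0, hr⟩ i (by simp [Fin.le_def])
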